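/- Let (V_1,…,V_n) be independent random variables, and let F, G be real-valued functions on ℝ^n each monotone nondecreasing in every coordinate and square-integrable. Then E[F(V)G(V)] ≥ E[F(V)]E[G(V)]. -/

import Mathlib

open MeasureTheory

/-- Integrability from a uniform bound on a finite measure. -/
lemma integrable_of_abs_le {α : Type*} [MeasurableSpace α] {ν : Measure α}
    [IsFiniteMeasure ν] {f : α → ℝ} (hf : AEStronglyMeasurable f ν) {C : ℝ}
    (hC : ∀ x, |f x| ≤ C) : Integrable f ν :=
  (integrable_const C).mono' hf (Filter.Eventually.of_forall fun x => by
    simpa [Real.norm_eq_abs] using hC x)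

/-- One-dimensional Chebyshev / FKG inequality. -/
lemma cheb_one (ν : Measure ℝ) [IsProbabilityMeasure ν] (f g : ℝ → ℝ)
    (hf : Monotone f) (hg : Monotone g) (hfi : Integrable f ν) (hgi : Integrable g ν)
    (hfgi : Integrable (fun x => f x * g x) ν) :
    (∫ x, f x ∂ν) * (∫ x, g x ∂ν) ≤ ∫ x, f x * g x ∂ν := by
  have hmap1 : Measure.map Prod.fst (ν.prod ν) = ν := by
    rw [Measure.map_fst_prod]; simp
  have hmap2 : Measure.map Prod.snd (ν.prod ν) = ν := by
    rw [Measure.map_snd_prod]; simp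
  have A1 : Integrable (fun p : ℝ × ℝ => f p.1 * g p.1) (ν.prod ν) := by
    have := (integrable_map_measure (f := (Prod.fst : ℝ × ℝ → ℝ))
      (g := fun x => f x * g x)
      (by rw [hmap1]; exact hfgi.aestronglyMeasurable)
      measurable_fst.aemeasurable).mp (by rwa [hmap1])
    exact this
  have A4 : Integrable (fun p : ℝ × ℝ => f p.2 * g p.2) (ν.prod ν) := by
    have := (integrable_map_measure (f := (Prod.snd : ℝ × ℝ → ℝ))
      (g := fun x => f x * g x)
      (by rw [hmap2]; exact hfgi.aestronglyMeasurable)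
      measurable_snd.aemeasurable).mp (by rwa [hmap2])
    exact this
  have A2 : Integrable (fun p : ℝ × ℝ => f p.1 * g p.2) (ν.prod ν) :=
    hfi.mul_prod hgi
  have A3 : Integrable (fun p : ℝ × ℝ => f p.2 * g p.1) (ν.prod ν) := by
    have := hgi.mul_prod hfi
    simpa [mul_comm] using this
  have S1 : Integrable (fun p : ℝ × ℝ => f p.1 * g p.1 + f p.2 * g p.2) (ν.prod ν) :=
    A1.add A4
  have S2 : Integrable (fun p : ℝ × ℝ => f p.1 * g p.2 + f p.2 * g p.1) (ν.prod ν) :=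
    A2.add A3
  have key : 0 ≤ ∫ p : ℝ × ℝ, ((f p.1 * g p.1 + f p.2 * g p.2)
      - (f p.1 * g p.2 + f p.2 * g p.1)) ∂(ν.prod ν) := by
    refine integral_nonneg fun p => ?_
    show (0 : ℝ) ≤ f p.1 * g p.1 + f p.2 * g p.2 - (f p.1 * g p.2 + f p.2 * g p.1)
    have h0 : 0 ≤ (f p.1 - f p.2) * (g p.1 - g p.2) := by
      rcases le_total p.1 p.2 with h | h
      · have h1 := sub_nonpos.2 (hf h)
        have h2 := sub_nonpos.2 (hg h)
        nlinarith
      · exact mul_nonneg (sub_nonneg.2 (hf h)) (sub_nonneg.2 (hg h))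
    nlinarith
  rw [integral_sub S1 S2, integral_add A1 A4, integral_add A2 A3] at key
  have e1 : ∫ p : ℝ × ℝ, f p.1 * g p.1 ∂(ν.prod ν) = ∫ x, f x * g x ∂ν := by
    have := integral_fun_fst (μ := ν) (ν := ν) (fun x => f x * g x)
    simpa using this
  have e4 : ∫ p : ℝ × ℝ, f p.2 * g p.2 ∂(ν.prod ν) = ∫ x, f x * g x ∂ν := by
    have := integral_fun_snd (μ := ν) (ν := ν) (fun x => f x * g x)
    simpa using this
  have e2 : ∫ p : ℝ × ℝ, f p.1 * g p.2 ∂(ν.prod ν) = (∫ x, f x ∂ν) * ∫ x, g x ∂ν :=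
    integral_prod_mul f g
  have e3 : ∫ p : ℝ × ℝ, f p.2 * g p.1 ∂(ν.prod ν) = (∫ x, g x ∂ν) * ∫ x, f x ∂ν := by
    have := integral_prod_mul (μ := ν) (ν := ν) g f
    rw [← this]
    simp_rw [mul_comm]
  rw [e1, e2, e3, e4] at key
  nlinarith [key]

/-- `Fin.insertNth` is monotone in both arguments (for real tuples). -/
lemma insertNth_mono {n : ℕ} (i : Fin (n + 1)) {x x' : ℝ} {v v' : Fin n → ℝ}
    (hx : x ≤ x') (hv : v ≤ v') :
    (Fin.insertNth i x v : Fin (n + 1) → ℝ) ≤ Fin.insertNth i x' v' := by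
  intro j
  rcases eq_or_ne j i with rfl | hj
  · simpa using hx
  · obtain ⟨k, rfl⟩ := Fin.exists_succAbove_eq hj
    simpa using hv k

/-- FKG inequality for bounded monotone functions, by induction on dimension. -/
lemma fkg_bdd : ∀ (n : ℕ) (μ : Fin n → Measure ℝ),
    (∀ i, IsProbabilityMeasure (μ i)) →
    ∀ (F G : (Fin n → ℝ) → ℝ) (C : ℝ), Monotone F → Monotone G →
    Measurable F → Measurable G → (∀ v, |F v| ≤ C) → (∀ v, |G v| ≤ C) →
    (∫ v, F v ∂(Measure.pi μ)) * (∫ v, G v ∂(Measure.pi μ))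
      ≤ ∫ v, F v * G v ∂(Measure.pi μ)
  | 0, μ, hinst, F, G, C, hF, hG, hFm, hGm, hFb, hGb => by
    haveI := hinst
    have hFc : F = fun _ => F default := funext fun v => by
      rw [Subsingleton.elim v default]
    have hGc : G = fun _ => G default := funext fun v => by
      rw [Subsingleton.elim v default]
    rw [hFc, hGc]
    simp
  | (n + 1), μ, hinst, F, G, C, hF, hG, hFm, hGm, hFb, hGb => by
    haveI := hinst
    set e := MeasurableEquiv.piFinSuccAbove (fun _ : Fin (n + 1) => ℝ) 0 with he
    have mp := measurePreserving_piFinSuccAbove μ 0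
    set ν := Measure.pi fun j => μ (Fin.succAbove 0 j) with hν
    haveI : IsProbabilityMeasure ν := by rw [hν]; infer_instance
    set F' : ℝ × (Fin n → ℝ) → ℝ := fun p => F (e.symm p) with hF'
    set G' : ℝ × (Fin n → ℝ) → ℝ := fun p => G (e.symm p) with hG'
    have hesymm : ∀ p : ℝ × (Fin n → ℝ), e.symm p = Fin.insertNth 0 p.1 p.2 := by
      intro p; rfl
    have hsmono : ∀ p q : ℝ × (Fin n → ℝ), p ≤ q → e.symm p ≤ e.symm q := by
      intro p q hpq
      rw [hesymm p, hesymm q]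
      exact insertNth_mono 0 hpq.1 hpq.2
    have hF'mono : Monotone F' := fun p q hpq => hF (hsmono _ _ hpq)
    have hG'mono : Monotone G' := fun p q hpq => hG (hsmono _ _ hpq)
    have hF'm : Measurable F' := hFm.comp e.symm.measurable
    have hG'm : Measurable G' := hGm.comp e.symm.measurable
    have hF'b : ∀ p, |F' p| ≤ C := fun p => hFb _
    have hG'b : ∀ p, |G' p| ≤ C := fun p => hGb _
    -- transfer integrals through the equivalence
    have hcompF : ∫ p, F' p ∂((μ 0).prod ν) = ∫ v, F v ∂(Measure.pi μ) :=
      (mp.symm e).integral_comp e.symm.measurableEmbedding F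
    have hcompG : ∫ p, G' p ∂((μ 0).prod ν) = ∫ v, G v ∂(Measure.pi μ) :=
      (mp.symm e).integral_comp e.symm.measurableEmbedding G
    have hcompFG : ∫ p, F' p * G' p ∂((μ 0).prod ν)
        = ∫ v, F v * G v ∂(Measure.pi μ) :=
      (mp.symm e).integral_comp e.symm.measurableEmbedding (fun v => F v * G v)
    -- partial integrals
    set F₁ : ℝ → ℝ := fun x => ∫ v, F' (x, v) ∂ν with hF₁
    set G₁ : ℝ → ℝ := fun x => ∫ v, G' (x, v) ∂ν with hG₁
    have sliceF : ∀ x : ℝ, Integrable (fun v => F' (x, v)) ν := fun x =>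
      integrable_of_abs_le
        ((hF'm.comp (measurable_const.prodMk measurable_id)).aestronglyMeasurable)
        (fun v => hF'b _)
    have sliceG : ∀ x : ℝ, Integrable (fun v => G' (x, v)) ν := fun x =>
      integrable_of_abs_le
        ((hG'm.comp (measurable_const.prodMk measurable_id)).aestronglyMeasurable)
        (fun v => hG'b _)
    have sliceFG : ∀ x : ℝ, Integrable (fun v => F' (x, v) * G' (x, v)) ν := fun x =>
      integrable_of_abs_le
        (((hF'm.comp (measurable_const.prodMk measurable_id)).mul
          (hG'm.comp (measurable_const.prodMk measurable_id))).aestronglyMeasurable)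
        (C := |C| * |C|) (fun v => by
          rw [abs_mul]
          exact mul_le_mul ((hF'b _).trans (le_abs_self C))
            ((hG'b _).trans (le_abs_self C)) (abs_nonneg _) (abs_nonneg _))
    have hF₁mono : Monotone F₁ := by
      intro x x' hx
      exact integral_mono (sliceF x) (sliceF x')
        (fun v => hF'mono ⟨hx, le_refl v⟩)
    have hG₁mono : Monotone G₁ := by
      intro x x' hx
      exact integral_mono (sliceG x) (sliceG x')
        (fun v => hG'mono ⟨hx, le_refl v⟩)
    have hF₁b : ∀ x, |F₁ x| ≤ |C| := fun x => by
      rw [← Real.norm_eq_abs]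
      calc ‖∫ v, F' (x, v) ∂ν‖ ≤ |C| * (ν Set.univ).toReal :=
            norm_integral_le_of_norm_le_const (Filter.Eventually.of_forall fun v => by
              simpa [Real.norm_eq_abs] using (hF'b (x, v)).trans (le_abs_self C))
        _ = |C| := by simp
    have hG₁b : ∀ x, |G₁ x| ≤ |C| := fun x => by
      rw [← Real.norm_eq_abs]
      calc ‖∫ v, G' (x, v) ∂ν‖ ≤ |C| * (ν Set.univ).toReal :=
            norm_integral_le_of_norm_le_const (Filter.Eventually.of_forall fun v => by
              simpa [Real.norm_eq_abs] using (hG'b (x, v)).trans (le_abs_self C))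
        _ = |C| := by simp
    have hF₁m : Measurable F₁ :=
      (hF'm.stronglyMeasurable.integral_prod_right' (ν := ν)).measurable
    have hG₁m : Measurable G₁ :=
      (hG'm.stronglyMeasurable.integral_prod_right' (ν := ν)).measurable
    have hF₁i : Integrable F₁ (μ 0) :=
      integrable_of_abs_le hF₁m.aestronglyMeasurable hF₁b
    have hG₁i : Integrable G₁ (μ 0) :=
      integrable_of_abs_le hG₁m.aestronglyMeasurable hG₁b
    have hF₁G₁i : Integrable (fun x => F₁ x * G₁ x) (μ 0) :=
      integrable_of_abs_le (hF₁m.mul hG₁m).aestronglyMeasurable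
        (C := |C| * |C|) (fun x => by
          rw [abs_mul]
          exact mul_le_mul (hF₁b x) (hG₁b x) (abs_nonneg _) (abs_nonneg _))
    -- Fubini for the product integrals
    have hintF' : Integrable F' ((μ 0).prod ν) :=
      integrable_of_abs_le hF'm.aestronglyMeasurable hF'b
    have hintG' : Integrable G' ((μ 0).prod ν) :=
      integrable_of_abs_le hG'm.aestronglyMeasurable hG'b
    have hintFG' : Integrable (fun p => F' p * G' p) ((μ 0).prod ν) :=
      integrable_of_abs_le (hF'm.mul hG'm).aestronglyMeasurable
        (C := |C| * |C|) (fun p => by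
          rw [abs_mul]
          exact mul_le_mul ((hF'b p).trans (le_abs_self C))
            ((hG'b p).trans (le_abs_self C)) (abs_nonneg _) (abs_nonneg _))
    have fubF : ∫ p, F' p ∂((μ 0).prod ν) = ∫ x, F₁ x ∂(μ 0) := by
      rw [integral_prod _ hintF']
    have fubG : ∫ p, G' p ∂((μ 0).prod ν) = ∫ x, G₁ x ∂(μ 0) := by
      rw [integral_prod _ hintG']
    have fubFG : ∫ p, F' p * G' p ∂((μ 0).prod ν)
        = ∫ x, ∫ v, F' (x, v) * G' (x, v) ∂ν ∂(μ 0) := by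
      rw [integral_prod _ hintFG']
    -- inner inequality from induction hypothesis
    have inner_le : ∀ x : ℝ, F₁ x * G₁ x ≤ ∫ v, F' (x, v) * G' (x, v) ∂ν := by
      intro x
      exact fkg_bdd n (fun j => μ (Fin.succAbove 0 j)) (fun j => hinst _)
        (fun v => F' (x, v)) (fun v => G' (x, v)) C
        (fun v v' hvv' => hF'mono ⟨le_refl x, hvv'⟩)
        (fun v v' hvv' => hG'mono ⟨le_refl x, hvv'⟩)
        (hF'm.comp (measurable_const.prodMk measurable_id))
        (hG'm.comp (measurable_const.prodMk measurable_id))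
        (fun v => hF'b _) (fun v => hG'b _)
    have innerInt : Integrable (fun x => ∫ v, F' (x, v) * G' (x, v) ∂ν) (μ 0) :=
      hintFG'.integral_prod_left
    calc (∫ v, F v ∂(Measure.pi μ)) * (∫ v, G v ∂(Measure.pi μ))
        = (∫ x, F₁ x ∂(μ 0)) * (∫ x, G₁ x ∂(μ 0)) := by
          rw [← hcompF, ← hcompG, fubF, fubG]
      _ ≤ ∫ x, F₁ x * G₁ x ∂(μ 0) :=
          cheb_one (μ 0) F₁ G₁ hF₁mono hG₁mono hF₁i hG₁i hF₁G₁i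
      _ ≤ ∫ x, ∫ v, F' (x, v) * G' (x, v) ∂ν ∂(μ 0) :=
          integral_mono hF₁G₁i innerInt inner_le
      _ = ∫ v, F v * G v ∂(Measure.pi μ) := by rw [← fubFG, hcompFG]

open MeasureTheory in
theorem stmt_18 (n : ℕ) (μ : Fin n → Measure ℝ) [∀ i, IsProbabilityMeasure (μ i)]
    (F G : (Fin n → ℝ) → ℝ) (hF : Monotone F) (hG : Monotone G)
    (hFm : Measurable F) (hGm : Measurable G)
    (hF2 : MemLp F 2 (Measure.pi μ)) (hG2 : MemLp G 2 (Measure.pi μ)) :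
    (∫ v, F v ∂(Measure.pi μ)) * (∫ v, G v ∂(Measure.pi μ))
      ≤ ∫ v, F v * G v ∂(Measure.pi μ) := by
  -- truncation
  set π := Measure.pi μ with hπ
  have hFi : Integrable F π := hF2.integrable (by norm_num)
  have hGi : Integrable G π := hG2.integrable (by norm_num)
  have hFGi : Integrable (fun v => F v * G v) π := by
    have hsq : Integrable (fun v => F v ^ 2 + G v ^ 2) π :=
      hF2.integrable_sq.add hG2.integrable_sq
    refine hsq.mono' ((hFm.mul hGm).aestronglyMeasurable) ?_
    refine Filter.Eventually.of_forall fun v => ?_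
    rw [Real.norm_eq_abs, abs_mul]
    nlinarith [sq_abs (F v), sq_abs (G v), sq_nonneg (|F v| - |G v|)]
  set trunc : ℕ → ℝ → ℝ := fun k t => max (-(k : ℝ)) (min (k : ℝ) t) with htrunc
  have trunc_mono : ∀ k, Monotone (trunc k) := fun k t t' h =>
    max_le_max le_rfl (min_le_min le_rfl h)
  have trunc_meas : ∀ k, Measurable (trunc k) := fun k =>
    measurable_const.max (measurable_const.min measurable_id)
  have trunc_abs : ∀ k t, |trunc k t| ≤ |t| := by
    intro k t
    simp only [htrunc]
    rw [abs_le]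
    constructor
    · rcases le_total t 0 with h | h
      · have hmin : min (k : ℝ) t = t := min_eq_right (h.trans (Nat.cast_nonneg k))
        have habs : -|t| = t := by rw [abs_of_nonpos h]; ring
        rw [hmin, habs]
        exact le_max_right _ _
      · exact (neg_nonpos.2 (abs_nonneg t)).trans
          (le_max_of_le_right (le_min (Nat.cast_nonneg k) h))
    · exact max_le ((neg_nonpos.2 (Nat.cast_nonneg k)).trans (abs_nonneg t))
        ((min_le_right _ _).trans (le_abs_self t))
  have trunc_bd : ∀ k t, |trunc k t| ≤ (k : ℝ) := by
    intro k t
    simp only [htrunc]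
    rw [abs_le]
    exact ⟨le_max_left _ _, max_le (by simpa using Nat.cast_nonneg k) (min_le_left _ _)⟩
  have trunc_tendsto : ∀ t : ℝ, Filter.Tendsto (fun k : ℕ => trunc k t)
      Filter.atTop (nhds t) := by
    intro t
    apply Filter.Tendsto.congr' _ tendsto_const_nhds
    filter_upwards [Filter.eventually_ge_atTop (Nat.ceil |t|)] with k hk
    have h1 : |t| ≤ (k : ℝ) := (Nat.ceil_le.mp le_rfl).trans (by exact_mod_cast hk)
    have h2 : t ≤ (k : ℝ) := (le_abs_self t).trans h1
    have h3 : -(k : ℝ) ≤ t := by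
      have := neg_abs_le t
      linarith
    simp [htrunc, min_eq_right h2, max_eq_right h3]
  -- the truncated inequality at each level k
  have step : ∀ k : ℕ,
      (∫ v, trunc k (F v) ∂π) * (∫ v, trunc k (G v) ∂π)
        ≤ ∫ v, trunc k (F v) * trunc k (G v) ∂π := by
    intro k
    exact fkg_bdd n μ (fun i => inferInstance)
      (fun v => trunc k (F v)) (fun v => trunc k (G v)) (k : ℝ)
      ((trunc_mono k).comp hF) ((trunc_mono k).comp hG)
      ((trunc_meas k).comp hFm) ((trunc_meas k).comp hGm)
      (fun v => trunc_bd k (F v)) (fun v => trunc_bd k (G v))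
  -- pass to the limit
  have tF : Filter.Tendsto (fun k : ℕ => ∫ v, trunc k (F v) ∂π)
      Filter.atTop (nhds (∫ v, F v ∂π)) := by
    apply tendsto_integral_of_dominated_convergence (fun v => |F v|)
      (fun k => ((trunc_meas k).comp hFm).aestronglyMeasurable)
      (by simpa [Real.norm_eq_abs] using hFi.abs)
      (fun k => Filter.Eventually.of_forall fun v => by
        simp only [Real.norm_eq_abs, Function.comp]
        exact trunc_abs k (F v))
      (Filter.Eventually.of_forall fun v => trunc_tendsto (F v))
  have tG : Filter.Tendsto (fun k : ℕ => ∫ v, trunc k (G v) ∂π)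
      Filter.atTop (nhds (∫ v, G v ∂π)) := by
    apply tendsto_integral_of_dominated_convergence (fun v => |G v|)
      (fun k => ((trunc_meas k).comp hGm).aestronglyMeasurable)
      (by simpa [Real.norm_eq_abs] using hGi.abs)
      (fun k => Filter.Eventually.of_forall fun v => by
        simp only [Real.norm_eq_abs, Function.comp]
        exact trunc_abs k (G v))
      (Filter.Eventually.of_forall fun v => trunc_tendsto (G v))
  have tFG : Filter.Tendsto (fun k : ℕ => ∫ v, trunc k (F v) * trunc k (G v) ∂π)
      Filter.atTop (nhds (∫ v, F v * G v ∂π)) := by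
    apply tendsto_integral_of_dominated_convergence (fun v => |F v * G v|)
      (fun k => (((trunc_meas k).comp hFm).mul ((trunc_meas k).comp hGm)).aestronglyMeasurable)
      (by simpa [Real.norm_eq_abs] using hFGi.abs)
      (fun k => Filter.Eventually.of_forall fun v => by
        simp only [Real.norm_eq_abs, Function.comp, Pi.mul_apply, abs_mul]
        exact mul_le_mul (trunc_abs k (F v)) (trunc_abs k (G v))
          (abs_nonneg _) (abs_nonneg _))
      (Filter.Eventually.of_forall fun v =>
        (trunc_tendsto (F v)).mul (trunc_tendsto (G v)))
  exact le_of_tendsto_of_tendsto' (tF.mul tG) tFG step
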